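/- Let (\mathcal{U}, \mathbf{k}, \mathbf{c}) be an Ekedahl-admissible triple. Then the limit lim_{X\to\infty} #V^{\mathcal{U}}_{\mathbf{k},\mathbf{c}}(X) / Vol(V_{\mathbf{k},\mathbf{c}}(X)) exists and equals \prod_{p prime} (1 - \mu_p(\mathcal{U}_p)). -/

import Mathlib

open MeasureTheory Filter Topology

noncomputable section

instance (p : Nat.Primes) : Fact (p : ℕ).Prime := ⟨p.2⟩
instance (p : ℕ) [Fact p.Prime] : MeasurableSpace ℤ_[p] := borel _
instance (p : ℕ) [Fact p.Prime] : BorelSpace ℤ_[p] := ⟨rfl⟩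

/-- The set of lattice points of the box `V_{k,c}(X) = ∏ᵢ [-(cᵢX)^{1/kᵢ}, (cᵢX)^{1/kᵢ}]`. -/
def latticeBox (n : ℕ) (k : Fin n → ℕ) (c : Fin n → ℝ) (X : ℝ) : Set (Fin n → ℤ) :=
  {x | ∀ i, |(x i : ℝ)| ≤ (c i * X) ^ ((k i : ℝ)⁻¹)}

/-- The volume of the box `V_{k,c}(X)`. -/
def boxVol (n : ℕ) (k : Fin n → ℕ) (c : Fin n → ℝ) (X : ℝ) : ℝ :=
  ∏ i : Fin n, (2 * (c i * X) ^ ((k i : ℝ)⁻¹))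

/-- The diagonal embedding `ℤ^n → ℤ_p^n`. -/
def padicEmbed (n : ℕ) (p : Nat.Primes) (x : Fin n → ℤ) : Fin n → ℤ_[p] :=
  fun i => ((x i : ℤ) : ℤ_[p])

/-- The sieved set `V^𝒰_{k,c}(X)` of lattice points in the box avoiding every `𝒰_p`. -/
def sievedBox (n : ℕ) (k : Fin n → ℕ) (c : Fin n → ℝ)
    (U : (p : Nat.Primes) → Set (Fin n → ℤ_[p])) (X : ℝ) : Set (Fin n → ℤ) :=
  {x | x ∈ latticeBox n k c X ∧ ∀ p : Nat.Primes, padicEmbed n p x ∉ U p}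

/-- Ekedahl admissibility of the triple `(𝒰, k, c)`. -/
def EkedahlAdmissible (n : ℕ) (k : Fin n → ℕ) (c : Fin n → ℝ)
    (U : (p : Nat.Primes) → Set (Fin n → ℤ_[p])) : Prop :=
  Tendsto (fun Y : ℝ =>
      limsup (fun X : ℝ =>
        (({x ∈ latticeBox n k c X |
            ∃ p : Nat.Primes, Y < (p : ℕ) ∧ padicEmbed n p x ∈ U p}).ncard : ℝ)
          / boxVol n k c X) atTop)
    atTop (𝓝 0)


section Counting

/-- 1-dim congruence class count: lower and upper bounds. -/
lemma oneDim_bounds (M : ℕ) (hM : 0 < M) (t : ZMod M) {B : ℝ} (hB : 0 ≤ B) :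
    2*B/M - 1 ≤ ({a : ℤ | |(a:ℝ)| ≤ B ∧ (a : ZMod M) = t}.ncard : ℝ) ∧
    ({a : ℤ | |(a:ℝ)| ≤ B ∧ (a : ZMod M) = t}.ncard : ℝ) ≤ 2*B/M + 1 := by
  haveI : NeZero M := ⟨hM.ne'⟩
  set t' : ℤ := (t.val : ℤ) with ht'
  have hMR : (0:ℝ) < M := by exact_mod_cast hM
  set α : ℝ := (-B - t')/M with hα
  set β : ℝ := (B - t')/M with hβ
  have hβα : β - α = 2*B/M := by rw [hα, hβ]; ring
  have key : ∀ a : ℤ, ((a : ZMod M) = t ↔ ∃ q, a = t' + M * q) := by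
    intro a
    have h1 : ((t' : ℤ) : ZMod M) = t := by
      rw [ht']; push_cast; exact ZMod.natCast_zmod_val t
    rw [← h1, ZMod.intCast_eq_intCast_iff]
    constructor
    · intro h
      obtain ⟨q, hq⟩ := (Int.modEq_iff_dvd.mp h)
      exact ⟨-q, by rw [mul_neg]; linarith [hq]⟩
    · rintro ⟨q, rfl⟩
      exact Int.ModEq.symm (Int.modEq_iff_dvd.mpr ⟨q, by ring⟩)
  have hset : {a : ℤ | |(a:ℝ)| ≤ B ∧ (a : ZMod M) = t}
      = (fun q : ℤ => t' + M * q) '' (Set.Icc ⌈α⌉ ⌊β⌋) := by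
    ext a
    simp only [Set.mem_setOf_eq, Set.mem_image, Set.mem_Icc, key a, abs_le]
    constructor
    · rintro ⟨⟨h1, h2⟩, q, rfl⟩
      refine ⟨q, ⟨Int.ceil_le.2 ?_, Int.le_floor.2 ?_⟩, rfl⟩
      · rw [hα, div_le_iff₀ hMR]; push_cast at h1 ⊢; linarith
      · rw [hβ, le_div_iff₀ hMR]; push_cast at h2 ⊢; linarith
    · rintro ⟨q, ⟨hq1, hq2⟩, rfl⟩
      have hq1' : α ≤ q := Int.ceil_le.1 hq1
      have hq2' : (q:ℝ) ≤ β := Int.le_floor.1 hq2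
      rw [hα, div_le_iff₀ hMR] at hq1'
      rw [hβ, le_div_iff₀ hMR] at hq2'
      refine ⟨⟨by push_cast; linarith, by push_cast; linarith⟩, q, rfl⟩
  have hinj : Function.Injective (fun q : ℤ => t' + M * q) := by
    intro a b hab
    simp only at hab
    have : (M:ℤ) ≠ 0 := by exact_mod_cast hM.ne'
    exact mul_left_cancel₀ this (by linarith [hab])
  have hcard : {a : ℤ | |(a:ℝ)| ≤ B ∧ (a : ZMod M) = t}.ncard
      = ((⌊β⌋ + 1 - ⌈α⌉).toNat) := by
    rw [hset, Set.ncard_image_of_injective _ hinj, ← Finset.coe_Icc,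
      Set.ncard_coe_finset, Int.card_Icc]
  rw [hcard]
  have hfl : (⌊β⌋ : ℝ) ≤ β := Int.floor_le β
  have hfl2 : β - 1 < ⌊β⌋ := Int.sub_one_lt_floor β
  have hcl : α ≤ (⌈α⌉ : ℝ) := Int.le_ceil α
  have hcl2 : (⌈α⌉ : ℝ) < α + 1 := Int.ceil_lt_add_one α
  rcases le_or_gt (⌊β⌋ + 1 - ⌈α⌉) 0 with h | h
  · rw [Int.toNat_of_nonpos h]
    have : (⌊β⌋ : ℝ) + 1 ≤ ⌈α⌉ := by exact_mod_cast (by linarith : (⌊β⌋:ℤ) + 1 ≤ ⌈α⌉)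
    have h2 : β - α < 1 := by linarith
    constructor
    · simp only [Nat.cast_zero]; linarith [hβα]
    · simp only [Nat.cast_zero]; positivity
  · have h3 : ((⌊β⌋ + 1 - ⌈α⌉).toNat : ℤ) = ⌊β⌋ + 1 - ⌈α⌉ := Int.toNat_of_nonneg h.le
    have h4 : ((⌊β⌋ + 1 - ⌈α⌉).toNat : ℝ) = ((⌊β⌋:ℝ) + 1 - ⌈α⌉) := by exact_mod_cast h3
    rw [h4]
    constructor <;> [linarith [hβα]; linarith [hβα]]

/-- one-dim sets of bounded integers are finite -/
lemma oneDim_finite (B : ℝ) (P : ℤ → Prop) : {a : ℤ | |(a:ℝ)| ≤ B ∧ P a}.Finite := by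
  apply Set.Finite.subset (Set.finite_Icc (⌈-B⌉) ⌊B⌋)
  rintro a ⟨ha, -⟩
  rw [abs_le] at ha
  exact ⟨Int.ceil_le.2 (by exact_mod_cast ha.1), Int.le_floor.2 (by exact_mod_cast ha.2)⟩

lemma ncard_univ_pi {n : ℕ} (s : Fin n → Set ℤ) :
    (Set.pi Set.univ s).ncard = ∏ i, (s i).ncard := by
  simp only [← Nat.card_coe_set_eq]
  rw [Nat.card_congr (Equiv.Set.univPi s), Nat.card_pi]

end Counting

section Density

def redInt (n M : ℕ) (x : Fin n → ℤ) : Fin n → ZMod M := fun i => ((x i : ℤ) : ZMod M)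

lemma bddInt_finite (B : ℝ) : {a : ℤ | |(a:ℝ)| ≤ B}.Finite := by
  apply Set.Finite.subset (Set.finite_Icc (⌈-B⌉) ⌊B⌋)
  rintro a ha
  rw [Set.mem_setOf_eq, abs_le] at ha
  exact ⟨Int.ceil_le.2 (by exact_mod_cast ha.1), Int.le_floor.2 (by exact_mod_cast ha.2)⟩

lemma latticeBox_finite (n : ℕ) (k : Fin n → ℕ) (c : Fin n → ℝ) (X : ℝ) :
    (latticeBox n k c X).Finite := by
  apply Set.Finite.subset (Set.Finite.pi (fun i => bddInt_finite ((c i * X) ^ ((k i : ℝ)⁻¹))))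
  intro x hx
  exact fun i _ => hx i

lemma ncard_biUnion {α β : Type*} (s : Finset β) (f : β → Set α)
    (hf : ∀ b ∈ s, (f b).Finite)
    (hdisj : ∀ b₁ ∈ s, ∀ b₂ ∈ s, b₁ ≠ b₂ → Disjoint (f b₁) (f b₂)) :
    (⋃ b ∈ s, f b).ncard = ∑ b ∈ s, (f b).ncard := by
  classical
  revert hf hdisj
  induction s using Finset.induction_on with
  | empty => intro _ _; simp
  | insert _ _ ha ih =>
    rename_i a s
    intro hf hdisj
    rw [Finset.sum_insert ha, Finset.set_biUnion_insert]
    have hdisj2 : Disjoint (f a) (⋃ b ∈ s, f b) := by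
      simp only [Set.disjoint_iUnion_right]
      intro b hb
      exact hdisj a (Finset.mem_insert_self a s) b (Finset.mem_insert_of_mem hb)
        (by rintro rfl; exact ha hb)
    rw [Set.ncard_union_eq hdisj2 (hf a (Finset.mem_insert_self a s))
      (Set.Finite.biUnion s.finite_toSet (fun b hb => hf b (Finset.mem_insert_of_mem hb)))]
    rw [ih (fun b hb => hf b (Finset.mem_insert_of_mem hb))
      (fun b₁ h₁ b₂ h₂ hne => hdisj _ (Finset.mem_insert_of_mem h₁) _ (Finset.mem_insert_of_mem h₂) hne)]

lemma classDensity (n : ℕ) (k : Fin n → ℕ) (hk : ∀ i, 1 ≤ k i)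
    (c : Fin n → ℝ) (hc : ∀ i, 0 < c i)
    (M : ℕ) (hM : 0 < M) (r : Fin n → ZMod M) :
    Filter.Tendsto
      (fun X : ℝ => ((latticeBox n k c X ∩ redInt n M ⁻¹' {r}).ncard : ℝ) / boxVol n k c X)
      Filter.atTop (𝓝 (1 / (M:ℝ)^n)) := by
  have hMR : (0:ℝ) < M := by exact_mod_cast hM
  set B : Fin n → ℝ → ℝ := fun i X => (c i * X) ^ ((k i : ℝ)⁻¹) with hB
  have hBpos : ∀ (i) (X : ℝ), 0 < X → 0 < B i X := fun i X hX =>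
    Real.rpow_pos_of_pos (by have := hc i; positivity) _
  have hBtop : ∀ i, Filter.Tendsto (fun X => B i X) Filter.atTop Filter.atTop := by
    intro i
    have hki : (0:ℝ) < (k i : ℝ)⁻¹ := by
      have : (0:ℝ) < (k i : ℝ) := by exact_mod_cast hk i
      exact inv_pos.2 this
    exact (tendsto_rpow_atTop hki).comp (Filter.Tendsto.const_mul_atTop (hc i) Filter.tendsto_id)
  have hsplit : ∀ X : ℝ, latticeBox n k c X ∩ redInt n M ⁻¹' {r}
      = Set.pi Set.univ (fun i => {a : ℤ | |(a:ℝ)| ≤ B i X ∧ ((a : ZMod M) = r i)}) := by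
    intro X
    ext x
    simp only [latticeBox, redInt, Set.mem_inter_iff, Set.mem_setOf_eq, Set.mem_preimage,
      Set.mem_singleton_iff, Set.mem_univ_pi, funext_iff]
    exact ⟨fun ⟨h1, h2⟩ i => ⟨h1 i, h2 i⟩, fun h => ⟨fun i => (h i).1, fun i => (h i).2⟩⟩
  have hfac : ∀ i, Filter.Tendsto
      (fun X : ℝ => ({a : ℤ | |(a:ℝ)| ≤ B i X ∧ ((a : ZMod M) = r i)}.ncard : ℝ) / (2 * B i X))
      Filter.atTop (𝓝 (1 / (M:ℝ))) := by
    intro i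
    have hinv : Filter.Tendsto (fun X : ℝ => (2 * B i X)⁻¹) Filter.atTop (𝓝 0) := by
      apply Filter.Tendsto.inv_tendsto_atTop
      exact Filter.Tendsto.const_mul_atTop two_pos (hBtop i)
    apply tendsto_of_tendsto_of_tendsto_of_le_of_le'
      (g := fun X : ℝ => 1 / (M:ℝ) - (2 * B i X)⁻¹) (h := fun X : ℝ => 1 / (M:ℝ) + (2 * B i X)⁻¹)
    · simpa using (tendsto_const_nhds.sub hinv)
    · simpa using (tendsto_const_nhds.add hinv)
    · filter_upwards [Filter.eventually_gt_atTop (0:ℝ)] with X hX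
      have hBX := hBpos i X hX
      have h2B : (0:ℝ) < 2 * B i X := by linarith
      have hbd := (oneDim_bounds M hM (r i) hBX.le).1
      rw [le_div_iff₀ h2B]
      have hexp : (1 / (M:ℝ) - (2 * B i X)⁻¹) * (2 * B i X) = 2 * B i X / M - 1 := by
        field_simp
        all_goals ring
      rw [hexp]
      linarith [hbd]
    · filter_upwards [Filter.eventually_gt_atTop (0:ℝ)] with X hX
      have hBX := hBpos i X hX
      have h2B : (0:ℝ) < 2 * B i X := by linarith
      have hbd := (oneDim_bounds M hM (r i) hBX.le).2
      rw [div_le_iff₀ h2B]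
      have hexp : (1 / (M:ℝ) + (2 * B i X)⁻¹) * (2 * B i X) = 2 * B i X / M + 1 := by
        field_simp
        all_goals ring
      rw [hexp]
      linarith [hbd]
  have hprod : Filter.Tendsto
      (fun X : ℝ => ∏ i : Fin n,
        (({a : ℤ | |(a:ℝ)| ≤ B i X ∧ ((a : ZMod M) = r i)}.ncard : ℝ) / (2 * B i X)))
      Filter.atTop (𝓝 (∏ _i : Fin n, 1 / (M:ℝ))) :=
    tendsto_finset_prod _ (fun i _ => hfac i)
  have hval : (∏ _i : Fin n, 1 / (M:ℝ)) = 1 / (M:ℝ)^n := by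
    rw [Finset.prod_const]
    simp [one_div, inv_pow]
  rw [hval] at hprod
  apply hprod.congr'
  filter_upwards [Filter.eventually_gt_atTop (0:ℝ)] with X hX
  rw [hsplit X, ncard_univ_pi]
  simp only [boxVol]
  rw [Nat.cast_prod, ← Finset.prod_div_distrib]

lemma setDensity (n : ℕ) (k : Fin n → ℕ) (hk : ∀ i, 1 ≤ k i)
    (c : Fin n → ℝ) (hc : ∀ i, 0 < c i)
    (M : ℕ) (hM : 0 < M) (T : Set (Fin n → ZMod M)) :
    Filter.Tendsto
      (fun X : ℝ => ((latticeBox n k c X ∩ redInt n M ⁻¹' T).ncard : ℝ) / boxVol n k c X)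
      Filter.atTop (𝓝 ((Nat.card T : ℝ) / (M:ℝ)^n)) := by
  haveI : NeZero M := ⟨hM.ne'⟩
  classical
  have hTfin : T.Finite := Set.toFinite T
  have hdecomp : ∀ X : ℝ, latticeBox n k c X ∩ redInt n M ⁻¹' T
      = ⋃ r ∈ hTfin.toFinset, (latticeBox n k c X ∩ redInt n M ⁻¹' {r}) := by
    intro X
    ext x
    simp only [Set.mem_inter_iff, Set.mem_preimage, Set.mem_iUnion, Set.Finite.mem_toFinset,
      Set.mem_singleton_iff]
    constructor
    · rintro ⟨h1, h2⟩; exact ⟨redInt n M x, h2, h1, rfl⟩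
    · rintro ⟨r, hr, h1, h2⟩; exact ⟨h1, h2 ▸ hr⟩
  have hcard : ∀ X : ℝ, ((latticeBox n k c X ∩ redInt n M ⁻¹' T).ncard : ℝ)
      = ∑ r ∈ hTfin.toFinset, ((latticeBox n k c X ∩ redInt n M ⁻¹' {r}).ncard : ℝ) := by
    intro X
    rw [hdecomp X, ncard_biUnion _ _
      (fun r _ => (latticeBox_finite n k c X).inter_of_left _)
      (fun r₁ _ r₂ _ hne => by
        apply Set.disjoint_left.2
        rintro x ⟨-, hx1⟩ ⟨-, hx2⟩
        simp only [Set.mem_preimage, Set.mem_singleton_iff] at hx1 hx2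
        exact hne (hx1 ▸ hx2 ▸ rfl))]
    push_cast
    ring
  have hsum : Filter.Tendsto
      (fun X : ℝ => ∑ r ∈ hTfin.toFinset,
        ((latticeBox n k c X ∩ redInt n M ⁻¹' {r}).ncard : ℝ) / boxVol n k c X)
      Filter.atTop (𝓝 (∑ _r ∈ hTfin.toFinset, 1 / (M:ℝ)^n)) :=
    tendsto_finset_sum _ (fun r _ => classDensity n k hk c hc M hM r)
  have hval : (∑ _r ∈ hTfin.toFinset, 1 / (M:ℝ)^n) = (Nat.card T : ℝ) / (M:ℝ)^n := by
    rw [Finset.sum_const, Nat.card_coe_set_eq, Set.ncard_eq_toFinset_card T hTfin]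
    simp [nsmul_eq_mul]
    ring
  rw [hval] at hsum
  apply hsum.congr
  intro X
  rw [hcard X, Finset.sum_div]

end Density

section CRT

lemma zmod_combine (n : ℕ) (M₁ M₂ : ℕ) (hco : Nat.Coprime M₁ M₂)
    (T₁ : Set (Fin n → ZMod M₁)) (T₂ : Set (Fin n → ZMod M₂)) :
    ∃ T : Set (Fin n → ZMod (M₁ * M₂)),
      (∀ x : Fin n → ℤ, (redInt n (M₁ * M₂) x ∈ T ↔ redInt n M₁ x ∈ T₁ ∧ redInt n M₂ x ∈ T₂)) ∧
      (Nat.card T : ℝ) = (Nat.card T₁ : ℝ) * (Nat.card T₂ : ℝ) := by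
  classical
  set e := ZMod.chineseRemainder hco with he
  set F : (Fin n → ZMod (M₁ * M₂)) ≃ ((Fin n → ZMod M₁) × (Fin n → ZMod M₂)) :=
    (Equiv.piCongrRight (fun _ => e.toEquiv)).trans
      (Equiv.arrowProdEquivProdArrow _ _ _) with hF
  refine ⟨F ⁻¹' (T₁ ×ˢ T₂), ?_, ?_⟩
  · intro x
    have hcoord : ∀ i : Fin n, e (((x i : ℤ) : ZMod (M₁*M₂)))
        = (((x i : ℤ) : ZMod M₁), ((x i : ℤ) : ZMod M₂)) := by
      intro i
      have h := map_intCast (e : ZMod (M₁*M₂) →+* ZMod M₁ × ZMod M₂) (x i)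
      simp only [RingEquiv.coe_toRingHom] at h
      rw [h]
      exact Prod.ext (by simp) (by simp)
    have hFx : F (redInt n (M₁*M₂) x) = (redInt n M₁ x, redInt n M₂ x) := by
      rw [hF]
      simp only [Equiv.trans_apply, Equiv.piCongrRight_apply, Equiv.arrowProdEquivProdArrow]
      refine Prod.ext (funext fun i => ?_) (funext fun i => ?_) <;>
        simp [redInt, Pi.map_apply, hcoord i]
    rw [Set.mem_preimage, hFx, Set.mem_prod]
  · have himg : F '' (F ⁻¹' (T₁ ×ˢ T₂)) = T₁ ×ˢ T₂ := Set.image_preimage_eq _ F.surjective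
    have hc : Nat.card (F ⁻¹' (T₁ ×ˢ T₂) : Set _) = Nat.card ((T₁ ×ˢ T₂ : Set _)) := by
      have h3 : (F ⁻¹' (T₁ ×ˢ T₂)).ncard = (T₁ ×ˢ T₂).ncard := by
        conv_rhs => rw [← himg]
        rw [Set.ncard_image_of_injective _ F.injective]
      rw [Nat.card_coe_set_eq, Nat.card_coe_set_eq, h3]
    rw [hc, Nat.card_congr (Equiv.Set.prod T₁ T₂), Nat.card_prod]
    push_cast
    ring

lemma represent (n : ℕ) (e : Nat.Primes → ℕ)
    (T : (p : Nat.Primes) → Set (Fin n → ZMod ((p:ℕ)^(e p))))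
    (S : Finset Nat.Primes) :
    ∃ M : ℕ, 0 < M ∧ (∀ q : Nat.Primes, q ∉ S → Nat.Coprime ((q:ℕ)) M) ∧
      ∃ T' : Set (Fin n → ZMod M),
        (∀ x : Fin n → ℤ, (redInt n M x ∈ T' ↔ ∀ p ∈ S, redInt n ((p:ℕ)^(e p)) x ∈ T p)) ∧
        (Nat.card T' : ℝ) / (M:ℝ)^n
          = ∏ p ∈ S, ((Nat.card (T p) : ℝ) / ((((p:ℕ)^(e p) : ℕ)) : ℝ)^n) := by
  classical
  induction S using Finset.induction_on with
  | empty =>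
    refine ⟨1, one_pos, fun q _ => Nat.coprime_one_right _, Set.univ, by simp, ?_⟩
    rw [Nat.card_coe_set_eq, Set.ncard_univ]
    simp [Nat.card_unique]
  | insert _ _ hp ih =>
    rename_i p S
    obtain ⟨M, hM, hcop, T', hiff, hcard⟩ := ih
    have hcopM : Nat.Coprime ((p:ℕ)^(e p)) M := Nat.Coprime.pow_left _ (hcop p hp)
    obtain ⟨T'', hiff2, hcard2⟩ := zmod_combine n ((p:ℕ)^(e p)) M hcopM (T p) T'
    have hppos : 0 < (p:ℕ)^(e p) := pow_pos p.2.pos _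
    refine ⟨(p:ℕ)^(e p) * M, Nat.mul_pos hppos hM, ?_, T'', ?_, ?_⟩
    · intro q hq
      have hq1 : q ≠ p := fun h => hq (h ▸ Finset.mem_insert_self p S)
      have hq2 : q ∉ S := fun h => hq (Finset.mem_insert_of_mem h)
      refine Nat.Coprime.mul_right ?_ (hcop q hq2)
      exact Nat.Coprime.pow_right _
        ((Nat.coprime_primes q.2 p.2).mpr (fun h => hq1 (Subtype.ext h)))
    · intro x
      rw [hiff2 x]
      constructor
      · rintro ⟨h1, h2⟩ q hq
        rcases Finset.mem_insert.mp hq with rfl | hq'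
        · exact h1
        · exact (hiff x).1 h2 q hq'
      · intro h
        exact ⟨h p (Finset.mem_insert_self p S),
          (hiff x).2 (fun q hq => h q (Finset.mem_insert_of_mem hq))⟩
    · rw [Finset.prod_insert hp, ← hcard, hcard2]
      have h1 : (((p:ℕ)^(e p) : ℕ) : ℝ) ≠ 0 := by positivity
      have h2 : ((M:ℕ) : ℝ) ≠ 0 := by
        simpa using hM.ne'
      rw [Nat.cast_mul, mul_pow]
      field_simp

end CRT

section Padic

def redPadic (n : ℕ) (p : ℕ) [Fact p.Prime] (e : ℕ) (z : Fin n → ℤ_[p]) :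
    Fin n → ZMod (p^e) := fun i => PadicInt.toZModPow e (z i)

lemma toZModPow_eq_iff (p : ℕ) [hp : Fact p.Prime] (e : ℕ) (z w : ℤ_[p]) :
    PadicInt.toZModPow e z = PadicInt.toZModPow e w ↔ ‖z - w‖ ≤ (p:ℝ)^(-(e:ℤ)) := by
  rw [PadicInt.norm_le_pow_iff_mem_span_pow, ← PadicInt.ker_toZModPow, RingHom.mem_ker,
    map_sub, sub_eq_zero]

lemma redPadic_eq_iff (n : ℕ) (p : ℕ) [hp : Fact p.Prime] (e : ℕ) (z w : Fin n → ℤ_[p]) :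
    redPadic n p e z = redPadic n p e w ↔ ∀ i, ‖z i - w i‖ ≤ (p:ℝ)^(-(e:ℤ)) := by
  rw [funext_iff]
  exact forall_congr' (fun i => toZModPow_eq_iff p e (z i) (w i))

lemma cell_eq_pi (n : ℕ) (p : ℕ) [hp : Fact p.Prime] (e : ℕ) (w : Fin n → ℤ_[p]) :
    redPadic n p e ⁻¹' {redPadic n p e w}
      = Set.pi Set.univ (fun i => Metric.closedBall (w i) ((p:ℝ)^(-(e:ℤ)))) := by
  ext z
  simp only [Set.mem_preimage, Set.mem_singleton_iff, Set.mem_univ_pi, Metric.mem_closedBall,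
    dist_eq_norm]
  exact redPadic_eq_iff n p e z w

lemma cell_isOpen (n : ℕ) (p : ℕ) [hp : Fact p.Prime] (e : ℕ) (w : Fin n → ℤ_[p]) :
    IsOpen (redPadic n p e ⁻¹' {redPadic n p e w}) := by
  rw [cell_eq_pi]
  apply isOpen_set_pi Set.finite_univ
  intro i _
  apply IsUltrametricDist.isOpen_closedBall
  have : (0:ℝ) < (p:ℝ)^(-(e:ℤ)) := by
    have : (0:ℝ) < (p:ℝ) := by exact_mod_cast hp.out.pos
    positivity
  exact this.ne'

lemma cell_measurable (n : ℕ) (p : ℕ) [hp : Fact p.Prime] (e : ℕ) (w : Fin n → ℤ_[p]) :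
    MeasurableSet (redPadic n p e ⁻¹' {redPadic n p e w}) := by
  rw [cell_eq_pi]
  exact MeasurableSet.univ_pi (fun i => measurableSet_closedBall)

lemma redPadic_surjective (n : ℕ) (p : ℕ) [hp : Fact p.Prime] (e : ℕ) :
    Function.Surjective (redPadic n p e) := by
  haveI : NeZero (p^e) := ⟨(pow_pos hp.out.pos e).ne'⟩
  intro r
  refine ⟨fun i => ((r i).val : ℤ_[p]), funext fun i => ?_⟩
  show PadicInt.toZModPow e (((r i).val : ℕ) : ℤ_[p]) = r i
  rw [map_natCast, ZMod.natCast_zmod_val]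

lemma fiber_measurable (n : ℕ) (p : ℕ) [hp : Fact p.Prime] (e : ℕ) (r : Fin n → ZMod (p^e)) :
    MeasurableSet (redPadic n p e ⁻¹' {r}) := by
  obtain ⟨w, rfl⟩ := redPadic_surjective n p e r
  exact cell_measurable n p e w

open scoped ENNReal in
lemma measure_redPadic_preimage (n : ℕ) (p : ℕ) [hp : Fact p.Prime] (e : ℕ)
    (μ : Measure (Fin n → ℤ_[p])) [μ.IsAddHaarMeasure] [IsProbabilityMeasure μ]
    (T : Set (Fin n → ZMod (p^e))) :
    μ (redPadic n p e ⁻¹' T) = (Nat.card T : ℝ≥0∞) / ((((p^e)^n : ℕ)) : ℝ≥0∞) := by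
  classical
  haveI : NeZero (p^e) := ⟨(pow_pos hp.out.pos e).ne'⟩
  set Φ := redPadic n p e with hΦ
  set K : Set (Fin n → ℤ_[p]) := Φ ⁻¹' {(0 : Fin n → ZMod (p^e))} with hK
  have hΦadd : ∀ z w : Fin n → ℤ_[p], Φ (z + w) = Φ z + Φ w := by
    intro z w
    funext i
    show PadicInt.toZModPow e (z i + w i) = _
    rw [map_add]
    rfl
  have hfib_trans : ∀ w : Fin n → ℤ_[p], Φ ⁻¹' {Φ w} = (fun z => -w + z) ⁻¹' K := by
    intro w
    ext z
    simp only [Set.mem_preimage, Set.mem_singleton_iff, hK]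
    constructor
    · intro h
      have := hΦadd (-w) z
      have hneg : Φ (-w) = -Φ w := by
        have h2 := hΦadd w (-w)
        simp only [add_neg_cancel] at h2
        have hΦ0 : Φ (0 : Fin n → ℤ_[p]) = 0 := by
          funext i
          show PadicInt.toZModPow e (0 : ℤ_[p]) = 0
          rw [map_zero]
        rw [hΦ0] at h2
        linear_combination (norm := abel) -h2
      rw [this, hneg, h]
      abel_nf
    · intro h
      have := hΦadd (-w) z
      rw [this] at h
      have hneg : Φ (-w) = -Φ w := by
        have h2 := hΦadd w (-w)
        simp only [add_neg_cancel] at h2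
        have hΦ0 : Φ (0 : Fin n → ℤ_[p]) = 0 := by
          funext i
          show PadicInt.toZModPow e (0 : ℤ_[p]) = 0
          rw [map_zero]
        rw [hΦ0] at h2
        linear_combination (norm := abel) -h2
      rw [hneg] at h
      have : -Φ w + Φ z = 0 := h
      linear_combination (norm := abel) this
  have hfibμ : ∀ r : Fin n → ZMod (p^e), μ (Φ ⁻¹' {r}) = μ K := by
    intro r
    obtain ⟨w, rfl⟩ := redPadic_surjective n p e r
    rw [hfib_trans w]
    exact measure_preimage_add μ (-w) K
  set cardN : ℕ := (p^e)^n with hcardN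
  have hcardN' : Fintype.card (Fin n → ZMod (p^e)) = cardN := by
    rw [Fintype.card_fun]
    simp [ZMod.card, hcardN]
  have hcover : (Set.univ : Set (Fin n → ℤ_[p])) = ⋃ r : Fin n → ZMod (p^e), Φ ⁻¹' {r} := by
    ext z
    simp only [Set.mem_univ, true_iff, Set.mem_iUnion, Set.mem_preimage, Set.mem_singleton_iff]
    exact ⟨Φ z, rfl⟩
  have hdisj : Pairwise (Function.onFun Disjoint (fun r : Fin n → ZMod (p^e) => Φ ⁻¹' {r})) := by
    intro r₁ r₂ hne
    apply Set.disjoint_left.2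
    rintro z hz1 hz2
    simp only [Set.mem_preimage, Set.mem_singleton_iff] at hz1 hz2
    exact hne (hz1 ▸ hz2 ▸ rfl)
  have hsum : (1 : ℝ≥0∞) = (cardN : ℝ≥0∞) * μ K := by
    have h1 : μ Set.univ = 1 := measure_univ
    rw [hcover, measure_iUnion hdisj (fiber_measurable n p e)] at h1
    rw [← h1, tsum_fintype]
    rw [Finset.sum_congr rfl (fun r _ => hfibμ r), Finset.sum_const, Finset.card_univ,
      hcardN', nsmul_eq_mul]
  have hc0 : (cardN : ℝ≥0∞) ≠ 0 := by
    simp only [ne_eq, Nat.cast_eq_zero, hcardN]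
    exact (pow_pos (pow_pos hp.out.pos e) n).ne'
  have hcT : (cardN : ℝ≥0∞) ≠ ⊤ := ENNReal.natCast_ne_top _
  have hκ : μ K = (cardN : ℝ≥0∞)⁻¹ := by
    have h := congrArg (fun t => (cardN : ℝ≥0∞)⁻¹ * t) hsum
    simp only [mul_one, ← mul_assoc, ENNReal.inv_mul_cancel hc0 hcT, one_mul] at h
    exact h.symm
  have hdecomp : Φ ⁻¹' T = ⋃ r ∈ T.toFinset, Φ ⁻¹' {r} := by
    ext z
    simp only [Set.mem_preimage, Set.mem_iUnion, Set.mem_toFinset, Set.mem_singleton_iff]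
    exact ⟨fun h => ⟨Φ z, h, rfl⟩, fun ⟨r, hr, h⟩ => h ▸ hr⟩
  rw [hdecomp, measure_biUnion_finset ?disj (fun r _ => fiber_measurable n p e r)]
  · rw [Finset.sum_congr rfl (fun r _ => (hfibμ r).trans hκ), Finset.sum_const, nsmul_eq_mul,
      Set.toFinset_card, ← Nat.card_eq_fintype_card, div_eq_mul_inv]
  case disj =>
    intro r₁ h₁ r₂ h₂ hne
    exact hdisj hne

lemma measure_redPadic_preimage_toReal (n : ℕ) (p : ℕ) [hp : Fact p.Prime] (e : ℕ)
    (μ : Measure (Fin n → ℤ_[p])) [μ.IsAddHaarMeasure] [IsProbabilityMeasure μ]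
    (T : Set (Fin n → ZMod (p^e))) :
    (μ (redPadic n p e ⁻¹' T)).toReal = (Nat.card T : ℝ) / ((((p^e)^n : ℕ)) : ℝ) := by
  rw [measure_redPadic_preimage n p e μ T, ENNReal.toReal_div]
  simp

end Padic

section Approx
open scoped ENNReal

lemma cell_anti (n : ℕ) (p : ℕ) [hp : Fact p.Prime] {e e' : ℕ} (h : e' ≤ e)
    {z w : Fin n → ℤ_[p]} (hzw : redPadic n p e z = redPadic n p e w) :
    redPadic n p e' z = redPadic n p e' w := by
  rw [redPadic_eq_iff] at hzw ⊢
  intro i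
  refine (hzw i).trans ?_
  have hp1 : (1:ℝ) ≤ (p:ℝ) := by exact_mod_cast hp.out.one_lt.le
  exact zpow_le_zpow_right₀ hp1 (by exact_mod_cast neg_le_neg (Int.ofNat_le.mpr h))

lemma clopen_sandwich (n : ℕ) (p : ℕ) [hp : Fact p.Prime] (K V : Set (Fin n → ℤ_[p]))
    (hK : IsCompact K) (hV : IsOpen V) (hKV : K ⊆ V) :
    ∃ e : ℕ, ∃ T : Set (Fin n → ZMod (p^e)),
      K ⊆ redPadic n p e ⁻¹' T ∧ redPadic n p e ⁻¹' T ⊆ V := by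
  classical
  have hcell : ∀ z : Fin n → ℤ_[p], z ∈ K →
      ∃ e₀ : ℕ, (redPadic n p e₀ ⁻¹' {redPadic n p e₀ z}) ⊆ V := by
    intro z hz
    obtain ⟨δ, hδ, hball⟩ := Metric.isOpen_iff.1 hV z (hKV hz)
    have hp1 : (1:ℝ) < (p:ℝ) := by exact_mod_cast hp.out.one_lt
    obtain ⟨e₀, he₀⟩ := exists_pow_lt_of_lt_one hδ (by
      rw [one_div]; exact inv_lt_one_of_one_lt₀ hp1 : 1 / (p:ℝ) < 1)
    refine ⟨e₀, fun w hw => hball ?_⟩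
    rw [Set.mem_preimage, Set.mem_singleton_iff, redPadic_eq_iff] at hw
    rw [Metric.mem_ball]
    have hle : dist w z ≤ (p:ℝ)^(-(e₀:ℤ)) := by
      apply dist_pi_le_iff (by positivity) |>.2
      intro i
      rw [dist_eq_norm]
      exact hw i
    have heq : ((p:ℝ))^(-(e₀:ℤ)) = (1/(p:ℝ))^e₀ := by
      rw [one_div, inv_pow, ← zpow_natCast, ← zpow_neg]
    exact lt_of_le_of_lt (hle.trans_eq heq) he₀
  choose! e₀ he₀ using hcell
  have hcover : K ⊆ ⋃ z : ↥K, (redPadic n p (e₀ ↑z) ⁻¹' {redPadic n p (e₀ ↑z) ↑z}) := by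
    intro z hz
    exact Set.mem_iUnion.2 ⟨⟨z, hz⟩, rfl⟩
  obtain ⟨t, ht⟩ := hK.elim_finite_subcover
    (fun z : ↥K => redPadic n p (e₀ ↑z) ⁻¹' {redPadic n p (e₀ ↑z) ↑z})
    (fun z => cell_isOpen n p (e₀ ↑z) ↑z) hcover
  set E : ℕ := t.sup (fun z => e₀ ↑z) with hE
  refine ⟨E, redPadic n p E '' K, Set.subset_preimage_image _ _, ?_⟩
  intro w hw
  obtain ⟨z, hzK, hz⟩ := hw
  obtain ⟨z₀, hz₀t, hzz₀⟩ : ∃ z₀ ∈ t,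
      z ∈ redPadic n p (e₀ ↑z₀) ⁻¹' {redPadic n p (e₀ ↑z₀) ↑z₀} := by
    have := ht hzK
    simpa only [Set.mem_iUnion, exists_prop] using this
  rw [Set.mem_preimage, Set.mem_singleton_iff] at hzz₀
  have hle : e₀ ↑z₀ ≤ E := Finset.le_sup (f := fun z : ↥K => e₀ ↑z) hz₀t
  have h1 : redPadic n p (e₀ ↑z₀) w = redPadic n p (e₀ ↑z₀) z := cell_anti n p hle (hz.symm ▸ rfl)
  have h2 : redPadic n p (e₀ ↑z₀) w = redPadic n p (e₀ ↑z₀) ↑z₀ := h1.trans hzz₀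
  exact he₀ ↑z₀ z₀.2 (by rw [Set.mem_preimage, Set.mem_singleton_iff]; exact h2)

lemma padic_approx (n : ℕ) (p : ℕ) [hp : Fact p.Prime] (μ : Measure (Fin n → ℤ_[p]))
    [μ.IsAddHaarMeasure] [IsProbabilityMeasure μ] (U : Set (Fin n → ℤ_[p]))
    (hU : MeasurableSet U) (hUb : μ (frontier U) = 0) {ε : ℝ} (hε : 0 < ε) :
    ∃ e₁ : ℕ, ∃ Tin : Set (Fin n → ZMod (p^e₁)), ∃ e₂ : ℕ, ∃ Tout : Set (Fin n → ZMod (p^e₂)),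
      (redPadic n p e₁ ⁻¹' Tin ⊆ U) ∧ (U ⊆ redPadic n p e₂ ⁻¹' Tout) ∧
      (μ U).toReal - ε ≤ (μ (redPadic n p e₁ ⁻¹' Tin)).toReal ∧
      (μ (redPadic n p e₂ ⁻¹' Tout)).toReal ≤ (μ U).toReal + ε := by
  have hfin : ∀ s : Set (Fin n → ℤ_[p]), μ s ≠ ⊤ := fun s => measure_ne_top μ s
  have hclosure_le : μ (closure U) ≤ μ (interior U) := by
    have hsub : closure U ⊆ interior U ∪ frontier U := by
      intro x hx
      by_cases h : x ∈ interior U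
      · exact Or.inl h
      · exact Or.inr ⟨hx, h⟩
    calc μ (closure U) ≤ μ (interior U) + μ (frontier U) :=
          le_trans (measure_mono hsub) (measure_union_le _ _)
      _ = μ (interior U) := by rw [hUb, add_zero]
  have hint : μ (interior U) = μ U :=
    le_antisymm (measure_mono interior_subset)
      (le_trans (measure_mono subset_closure) hclosure_le)
  have hclos : μ (closure U) = μ U :=
    le_antisymm (hclosure_le.trans hint.le) (measure_mono subset_closure)
  set εE : ℝ≥0∞ := ENNReal.ofReal ε with hεE
  have hεE0 : εE ≠ 0 := by
    simp only [hεE, ne_eq, ENNReal.ofReal_eq_zero, not_le]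
    exact hε
  -- inner approximation
  obtain ⟨F, hFsub, hFclosed, hFμ⟩ :=
    (show MeasurableSet (interior U) from isOpen_interior.measurableSet).exists_isClosed_lt_add
      (hfin _) hεE0
  have hFcompact : IsCompact F := hFclosed.isCompact
  obtain ⟨e₁, Tin, hTin1, hTin2⟩ :=
    clopen_sandwich n p F (interior U) hFcompact isOpen_interior hFsub
  -- outer approximation
  obtain ⟨V, hVsub, hVopen, hVμ⟩ :=
    Set.exists_isOpen_lt_add (closure U) (hfin _) hεE0
  obtain ⟨e₂, Tout, hTout1, hTout2⟩ :=
    clopen_sandwich n p (closure U) V isClosed_closure.isCompact hVopen hVsub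
  refine ⟨e₁, Tin, e₂, Tout, hTin2.trans interior_subset, subset_closure.trans hTout1, ?_, ?_⟩
  · have h1 : (μ (interior U)).toReal ≤ (μ F).toReal + ε := by
      have := ENNReal.toReal_mono (by
        rw [ENNReal.add_ne_top]; exact ⟨hfin _, ENNReal.ofReal_ne_top⟩) hFμ.le
      rw [ENNReal.toReal_add (hfin _) ENNReal.ofReal_ne_top, ENNReal.toReal_ofReal hε.le] at this
      linarith [this]
    have h2 : (μ F).toReal ≤ (μ (redPadic n p e₁ ⁻¹' Tin)).toReal :=
      ENNReal.toReal_mono (hfin _) (measure_mono hTin1)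
    have h3 : (μ (interior U)).toReal = (μ U).toReal := by rw [hint]
    linarith
  · have h1 : (μ V).toReal ≤ (μ (closure U)).toReal + ε := by
      have := ENNReal.toReal_mono (by
        rw [ENNReal.add_ne_top]; exact ⟨hfin _, ENNReal.ofReal_ne_top⟩) hVμ.le
      rw [ENNReal.toReal_add (hfin _) ENNReal.ofReal_ne_top, ENNReal.toReal_ofReal hε.le] at this
      linarith [this]
    have h2 : (μ (redPadic n p e₂ ⁻¹' Tout)).toReal ≤ (μ V).toReal :=
      ENNReal.toReal_mono (hfin _) (measure_mono hTout2)
    have h3 : (μ (closure U)).toReal = (μ U).toReal := by rw [hclos]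
    linarith

end Approx

section Glue

lemma prod_abs_sub_prod_le {ι : Type*} [DecidableEq ι] (S : Finset ι) (a b : ι → ℝ) (δ : ℝ)
    (ha : ∀ i ∈ S, 0 ≤ a i ∧ a i ≤ 1) (hb : ∀ i ∈ S, 0 ≤ b i ∧ b i ≤ 1)
    (hab : ∀ i ∈ S, |a i - b i| ≤ δ) :
    |∏ i ∈ S, a i - ∏ i ∈ S, b i| ≤ S.card * δ := by
  revert ha hb hab
  induction S using Finset.induction_on with
  | empty => intro _ _ _; simp
  | insert _ _ hi ih =>
    rename_i i S
    intro ha hb hab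
    have hmem := Finset.mem_insert_self i S
    have hδ : 0 ≤ δ := le_trans (abs_nonneg _) (hab i hmem)
    have haP : |∏ j ∈ S, a j - ∏ j ∈ S, b j| ≤ S.card * δ :=
      ih (fun j hj => ha j (Finset.mem_insert_of_mem hj))
        (fun j hj => hb j (Finset.mem_insert_of_mem hj))
        (fun j hj => hab j (Finset.mem_insert_of_mem hj))
    rw [Finset.prod_insert hi, Finset.prod_insert hi, Finset.card_insert_of_notMem hi]
    have hbQ : |∏ j ∈ S, b j| ≤ 1 := by
      rw [abs_of_nonneg (Finset.prod_nonneg (fun j hj => (hb j (Finset.mem_insert_of_mem hj)).1))]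
      exact Finset.prod_le_one (fun j hj => (hb j (Finset.mem_insert_of_mem hj)).1)
        (fun j hj => (hb j (Finset.mem_insert_of_mem hj)).2)
    have hai : |a i| ≤ 1 := by
      rw [abs_of_nonneg (ha i hmem).1]; exact (ha i hmem).2
    calc |a i * ∏ j ∈ S, a j - b i * ∏ j ∈ S, b j|
        = |a i * (∏ j ∈ S, a j - ∏ j ∈ S, b j) + (a i - b i) * ∏ j ∈ S, b j| := by ring_nf
      _ ≤ |a i * (∏ j ∈ S, a j - ∏ j ∈ S, b j)| + |(a i - b i) * ∏ j ∈ S, b j| := abs_add_le _ _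
      _ = |a i| * |∏ j ∈ S, a j - ∏ j ∈ S, b j| + |a i - b i| * |∏ j ∈ S, b j| := by
          rw [abs_mul, abs_mul]
      _ ≤ 1 * (S.card * δ) + δ * 1 := by
          have h1 : |a i| * |∏ j ∈ S, a j - ∏ j ∈ S, b j| ≤ 1 * (S.card * δ) :=
            mul_le_mul hai haP (abs_nonneg _) one_pos.le
          have h2 : |a i - b i| * |∏ j ∈ S, b j| ≤ δ * 1 :=
            mul_le_mul (hab i hmem) hbQ (abs_nonneg _) hδ
          linarith
      _ = (S.card + 1) * δ := by ring
      _ = ((S.card + 1 : ℕ) : ℝ) * δ := by push_cast; ring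

lemma prob_partial_prods (f : Nat.Primes → ℝ) (h0 : ∀ p, 0 ≤ f p) (h1 : ∀ p, f p ≤ 1) :
    HasProd f (⨅ s : Finset Nat.Primes, ∏ p ∈ s, f p) := by
  apply tendsto_atTop_ciInf
  · intro s t hst
    calc ∏ p ∈ t, f p = (∏ p ∈ t \ s, f p) * ∏ p ∈ s, f p := (Finset.prod_sdiff hst).symm
      _ ≤ 1 * ∏ p ∈ s, f p := by
          apply mul_le_mul_of_nonneg_right _ (Finset.prod_nonneg (fun i _ => h0 i))
          exact Finset.prod_le_one (fun i _ => h0 i) (fun i _ => h1 i)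
      _ = ∏ p ∈ s, f p := one_mul _
  · refine ⟨0, ?_⟩
    rintro x ⟨s, rfl⟩
    exact Finset.prod_nonneg (fun i _ => h0 i)

lemma primesUpTo_finite (Y : ℝ) : {p : Nat.Primes | ((p:ℕ):ℝ) ≤ Y}.Finite := by
  have h1 : {m : ℕ | (m:ℝ) ≤ Y}.Finite := by
    apply Set.Finite.subset (Set.finite_Iic ⌊Y⌋₊)
    intro m hm
    exact Nat.le_floor hm
  have h2 : {p : Nat.Primes | ((p:ℕ):ℝ) ≤ Y}
      = (fun p : Nat.Primes => (p:ℕ)) ⁻¹' {m : ℕ | (m:ℝ) ≤ Y} := rfl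
  rw [h2]
  exact Set.Finite.preimage (Set.injOn_of_injective Nat.Primes.coe_nat_injective) h1

end Glue

set_option maxHeartbeats 1000000 in
/-- The Ekedahl sieve: for an Ekedahl-admissible triple `(𝒰, k, c)`, the density of the sieved
set of lattice points in the box `V_{k,c}(X)` converges, as `X → ∞`, to the product over all
primes `p` of `1 - μ_p(𝒰_p)`, where `μ_p` is the Haar probability measure on `ℤ_p^n`. -/
theorem ekedahl_sieve_density (n : ℕ) (hn : 1 ≤ n)
    (k : Fin n → ℕ) (hk : ∀ i, 1 ≤ k i)
    (c : Fin n → ℝ) (hc : ∀ i, 0 < c i)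
    (U : (p : Nat.Primes) → Set (Fin n → ℤ_[p]))
    (μ : (p : Nat.Primes) → Measure (Fin n → ℤ_[p]))
    (hμ : ∀ p, (μ p).IsAddHaarMeasure) (hμprob : ∀ p, IsProbabilityMeasure (μ p))
    (hUmeas : ∀ p, MeasurableSet (U p))
    (hUbd : ∀ p, μ p (frontier (U p)) = 0)
    (hEk : EkedahlAdmissible n k c U) :
    Tendsto (fun X : ℝ => ((sievedBox n k c U X).ncard : ℝ) / boxVol n k c X) atTop
      (𝓝 (∏' p : Nat.Primes, (1 - (μ p (U p)).toReal))) := by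
  classical
  have hμle : ∀ (p : Nat.Primes) (s : Set (Fin n → ℤ_[(p:ℕ)])), (μ p s).toReal ≤ 1 := by
    intro p s
    haveI := hμprob p
    have h1 : μ p s ≤ 1 := prob_le_one
    calc (μ p s).toReal ≤ (1 : ENNReal).toReal := ENNReal.toReal_mono (by simp) h1
      _ = 1 := by simp
  have hVol : ∀ X : ℝ, 0 < X → 0 < boxVol n k c X := by
    intro X hX
    simp only [boxVol]
    apply Finset.prod_pos
    intro i _
    have h1 : 0 < c i * X := mul_pos (hc i) hX
    have := Real.rpow_pos_of_pos h1 ((k i : ℝ)⁻¹)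
    linarith
  set f : Nat.Primes → ℝ := fun p => 1 - (μ p (U p)).toReal with hf
  have hf0 : ∀ p, 0 ≤ f p := by
    intro p
    have := hμle p (U p)
    simp only [hf]
    linarith
  have hf1 : ∀ p, f p ≤ 1 := by
    intro p
    have := ENNReal.toReal_nonneg (a := μ p (U p))
    simp only [hf]
    linarith
  have hHasProd := prob_partial_prods f hf0 hf1
  set L : ℝ := ⨅ s : Finset Nat.Primes, ∏ p ∈ s, f p with hL
  have htprod : ∏' p, f p = L := hHasProd.tprod_eq
  rw [show (∏' p : Nat.Primes, (1 - (μ p (U p)).toReal)) = L from htprod]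
  have hboxdensity : Filter.Tendsto
      (fun X : ℝ => ((latticeBox n k c X).ncard : ℝ) / boxVol n k c X) atTop (𝓝 1) := by
    have h := setDensity n k hk c hc 1 one_pos Set.univ
    have hval : ((Nat.card (Set.univ : Set (Fin n → ZMod 1)) : ℝ) / ((1:ℕ):ℝ)^n) = 1 := by
      rw [Nat.card_coe_set_eq, Set.ncard_univ]
      simp
    rw [hval] at h
    apply h.congr
    intro X
    rw [Set.preimage_univ, Set.inter_univ]
  have hSYtendsto : Filter.Tendsto (fun Y : ℝ => (primesUpTo_finite Y).toFinset) atTop atTop := by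
    rw [Filter.tendsto_atTop]
    intro t
    have hev : ∀ᶠ Y : ℝ in atTop, ∀ p ∈ t, p ∈ (primesUpTo_finite Y).toFinset := by
      rw [Finset.eventually_all]
      intro p _
      filter_upwards [Filter.eventually_ge_atTop (((p:ℕ):ℝ))] with Y hY
      rw [Set.Finite.mem_toFinset]
      exact hY
    filter_upwards [hev] with Y hY
    exact Finset.le_iff_subset.2 (fun p hp => hY p hp)
  have hprodY : Filter.Tendsto (fun Y : ℝ => ∏ p ∈ (primesUpTo_finite Y).toFinset, f p)
      atTop (𝓝 L) := hHasProd.comp hSYtendsto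
  rw [Metric.tendsto_nhds]
  intro ε hε
  set ε' : ℝ := ε/4 with hε'
  have hε'pos : 0 < ε' := by positivity
  simp only [EkedahlAdmissible] at hEk
  have hev1 := (Metric.tendsto_nhds.1 hprodY) ε' hε'pos
  have hev2 := (Metric.tendsto_nhds.1 hEk) ε' hε'pos
  obtain ⟨Y, hY1, hY2⟩ := (hev1.and hev2).exists
  set S : Finset Nat.Primes := (primesUpTo_finite Y).toFinset with hS
  set εS : ℝ := ε' / (S.card + 1) with hεS
  have hεSpos : 0 < εS := by positivity
  have hsum_εS : (S.card : ℝ) * εS ≤ ε' := by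
    rw [hεS]
    have hpos : (0:ℝ) < (S.card : ℝ) + 1 := by positivity
    rw [mul_div_assoc', div_le_iff₀ hpos]
    nlinarith
  have H : ∀ p : Nat.Primes, ∃ (a : ℕ) (Tin' : Set (Fin n → ZMod ((p:ℕ)^a)))
      (b : ℕ) (Tout' : Set (Fin n → ZMod ((p:ℕ)^b))),
      (redPadic n (p:ℕ) a ⁻¹' Tin' ⊆ U p) ∧ (U p ⊆ redPadic n (p:ℕ) b ⁻¹' Tout') ∧
      ((μ p (U p)).toReal - εS ≤ (μ p (redPadic n (p:ℕ) a ⁻¹' Tin')).toReal) ∧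
      ((μ p (redPadic n (p:ℕ) b ⁻¹' Tout')).toReal ≤ (μ p (U p)).toReal + εS) := by
    intro p
    haveI := hμ p
    haveI := hμprob p
    exact padic_approx n (p:ℕ) (μ p) (U p) (hUmeas p) (hUbd p) hεSpos
  choose e₁ Tin e₂ Tout hTinU hUTout hμin hμout using H
  have hbridge : ∀ (p : Nat.Primes) (m : ℕ) (x : Fin n → ℤ),
      redInt n ((p:ℕ)^m) x = redPadic n (p:ℕ) m (padicEmbed n p x) := by
    intro p m x
    funext i
    exact (map_intCast (PadicInt.toZModPow m) (x i)).symm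
  have hfactor : ∀ (p : Nat.Primes) (m : ℕ) (T : Set (Fin n → ZMod ((p:ℕ)^m))),
      (Nat.card (↥(Tᶜ)) : ℝ) / ((((p:ℕ)^m : ℕ)) : ℝ)^n
        = 1 - (μ p (redPadic n (p:ℕ) m ⁻¹' T)).toReal := by
    intro p m T
    haveI := hμ p
    haveI := hμprob p
    haveI : NeZero ((p:ℕ)^m) := ⟨(pow_pos p.2.pos m).ne'⟩
    rw [measure_redPadic_preimage_toReal n (p:ℕ) m (μ p) T]
    have hD : (((((p:ℕ)^m)^n : ℕ)) : ℝ) = ((((p:ℕ)^m : ℕ)) : ℝ)^n := by push_cast; ring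
    have hDpos : (0:ℝ) < ((((p:ℕ)^m : ℕ)) : ℝ)^n := by
      have h0 : (0:ℝ) < (((p:ℕ)^m : ℕ) : ℝ) := by exact_mod_cast pow_pos p.2.pos m
      positivity
    have hcards : Nat.card (Fin n → ZMod ((p:ℕ)^m)) = ((p:ℕ)^m)^n := by
      rw [Nat.card_eq_fintype_card, Fintype.card_fun]
      simp [ZMod.card]
    have hcompl := Set.ncard_add_ncard_compl T
    rw [hD, Nat.card_coe_set_eq, Nat.card_coe_set_eq, eq_sub_iff_add_eq,
      ← add_div, div_eq_one_iff_eq hDpos.ne']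
    rw [← hD, ← hcards, ← hcompl]
    push_cast
    ring
  obtain ⟨Mu, hMupos, -, T'u, hiffu, hcardu⟩ := represent n e₁ (fun p => (Tin p)ᶜ) S
  obtain ⟨Ml, hMlpos, -, T'l, hiffl, hcardl⟩ := represent n e₂ (fun p => (Tout p)ᶜ) S
  set Lup : ℝ := ∏ p ∈ S, (1 - (μ p (redPadic n (p:ℕ) (e₁ p) ⁻¹' Tin p)).toReal) with hLup
  set Llo : ℝ := ∏ p ∈ S, (1 - (μ p (redPadic n (p:ℕ) (e₂ p) ⁻¹' Tout p)).toReal) with hLlo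
  have hcardu' : (Nat.card T'u : ℝ) / (Mu:ℝ)^n = Lup := by
    rw [hcardu, hLup]
    exact Finset.prod_congr rfl (fun p _ => hfactor p (e₁ p) (Tin p))
  have hcardl' : (Nat.card T'l : ℝ) / (Ml:ℝ)^n = Llo := by
    rw [hcardl, hLlo]
    exact Finset.prod_congr rfl (fun p _ => hfactor p (e₂ p) (Tout p))
  have hupT := setDensity n k hk c hc Mu hMupos T'u
  rw [hcardu'] at hupT
  have hloT := setDensity n k hk c hc Ml hMlpos T'l
  rw [hcardl'] at hloT
  -- inclusions
  have hsub_up : ∀ X : ℝ, sievedBox n k c U X ⊆ latticeBox n k c X ∩ redInt n Mu ⁻¹' T'u := by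
    rintro X x ⟨hxbox, hxavoid⟩
    refine ⟨hxbox, ?_⟩
    rw [Set.mem_preimage]
    apply (hiffu x).2
    intro p hp
    simp only [Set.mem_compl_iff]
    intro hmem
    apply hxavoid p
    apply hTinU p
    rw [Set.mem_preimage, ← hbridge p (e₁ p) x]
    exact hmem
  have hsub_lo : ∀ X : ℝ, (latticeBox n k c X ∩ redInt n Ml ⁻¹' T'l)
      ⊆ sievedBox n k c U X ∪ {x ∈ latticeBox n k c X |
          ∃ p : Nat.Primes, Y < (p:ℕ) ∧ padicEmbed n p x ∈ U p} := by
    rintro X x ⟨hxbox, hxT⟩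
    by_cases hsie : x ∈ sievedBox n k c U X
    · exact Or.inl hsie
    · right
      refine ⟨hxbox, ?_⟩
      have hex : ¬ ∀ p : Nat.Primes, padicEmbed n p x ∉ U p := fun h => hsie ⟨hxbox, h⟩
      push_neg at hex
      obtain ⟨p, hpU⟩ := hex
      refine ⟨p, ?_, hpU⟩
      by_contra hle
      push_neg at hle
      have hpS : p ∈ S := by
        rw [hS, Set.Finite.mem_toFinset]
        exact hle
      have hcon := (hiffl x).1 hxT p hpS
      apply hcon
      have h2 := hUTout p hpU
      rw [Set.mem_preimage] at h2
      show redInt n ((p:ℕ)^(e₂ p)) x ∈ Tout p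
      rw [hbridge p (e₂ p) x]
      exact h2
  -- tail control
  have hY2' : Filter.limsup (fun X : ℝ =>
      (({x ∈ latticeBox n k c X | ∃ p : Nat.Primes,
          Y < (p:ℕ) ∧ padicEmbed n p x ∈ U p}).ncard : ℝ) / boxVol n k c X) atTop < ε' := by
    have h := hY2
    rw [Real.dist_eq, sub_zero] at h
    exact (abs_lt.1 h).2
  have hbound : Filter.IsBoundedUnder (· ≤ ·) atTop (fun X : ℝ =>
      (({x ∈ latticeBox n k c X | ∃ p : Nat.Primes,
          Y < (p:ℕ) ∧ padicEmbed n p x ∈ U p}).ncard : ℝ) / boxVol n k c X) := by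
    apply Filter.isBoundedUnder_of_eventually_le (a := 2)
    have hbd2 : ∀ᶠ X : ℝ in atTop,
        ((latticeBox n k c X).ncard : ℝ) / boxVol n k c X < 2 := by
      have h := (Metric.tendsto_nhds.1 hboxdensity) 1 one_pos
      filter_upwards [h] with X hX
      rw [Real.dist_eq] at hX
      have := abs_lt.1 hX
      linarith [this.2]
    filter_upwards [hbd2, Filter.eventually_gt_atTop (0:ℝ)] with X hX hX0
    have hV := hVol X hX0
    have hsubset : {x ∈ latticeBox n k c X | ∃ p : Nat.Primes,
        Y < (p:ℕ) ∧ padicEmbed n p x ∈ U p} ⊆ latticeBox n k c X := Set.sep_subset _ _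
    have hmono : (({x ∈ latticeBox n k c X | ∃ p : Nat.Primes,
        Y < (p:ℕ) ∧ padicEmbed n p x ∈ U p}).ncard : ℝ) ≤ ((latticeBox n k c X).ncard : ℝ) := by
      exact_mod_cast Set.ncard_le_ncard hsubset (latticeBox_finite n k c X)
    calc (({x ∈ latticeBox n k c X | ∃ p : Nat.Primes,
          Y < (p:ℕ) ∧ padicEmbed n p x ∈ U p}).ncard : ℝ) / boxVol n k c X
        ≤ ((latticeBox n k c X).ncard : ℝ) / boxVol n k c X :=
          div_le_div_of_nonneg_right hmono hV.le
      _ ≤ 2 := hX.le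
  have htailev : ∀ᶠ X : ℝ in atTop, (({x ∈ latticeBox n k c X | ∃ p : Nat.Primes,
      Y < (p:ℕ) ∧ padicEmbed n p x ∈ U p}).ncard : ℝ) / boxVol n k c X < ε' :=
    Filter.eventually_lt_of_limsup_lt hY2' hbound
  have hmono_in : ∀ p : Nat.Primes,
      (μ p (redPadic n (p:ℕ) (e₁ p) ⁻¹' Tin p)).toReal ≤ (μ p (U p)).toReal := by
    intro p
    haveI := hμprob p
    exact ENNReal.toReal_mono (measure_ne_top _ _) (measure_mono (hTinU p))
  have hmono_out : ∀ p : Nat.Primes,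
      (μ p (U p)).toReal ≤ (μ p (redPadic n (p:ℕ) (e₂ p) ⁻¹' Tout p)).toReal := by
    intro p
    haveI := hμprob p
    exact ENNReal.toReal_mono (measure_ne_top _ _) (measure_mono (hUTout p))
  have hPS_up : |Lup - ∏ p ∈ S, f p| ≤ (S.card : ℝ) * εS := by
    rw [hLup]
    apply prod_abs_sub_prod_le S _ f εS
    · intro p hp
      constructor
      · have := hμle p (redPadic n (p:ℕ) (e₁ p) ⁻¹' Tin p)
        linarith
      · have := ENNReal.toReal_nonneg (a := μ p (redPadic n (p:ℕ) (e₁ p) ⁻¹' Tin p))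
        linarith
    · intro p hp
      exact ⟨hf0 p, hf1 p⟩
    · intro p hp
      have h1 := hμin p
      have h2 := hmono_in p
      rw [abs_le]
      simp only [hf]
      constructor
      · linarith
      · linarith
  have hPS_lo : |Llo - ∏ p ∈ S, f p| ≤ (S.card : ℝ) * εS := by
    rw [hLlo]
    apply prod_abs_sub_prod_le S _ f εS
    · intro p hp
      constructor
      · have := hμle p (redPadic n (p:ℕ) (e₂ p) ⁻¹' Tout p)
        linarith
      · have := ENNReal.toReal_nonneg (a := μ p (redPadic n (p:ℕ) (e₂ p) ⁻¹' Tout p))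
        linarith
    · intro p hp
      exact ⟨hf0 p, hf1 p⟩
    · intro p hp
      have h1 := hμout p
      have h2 := hmono_out p
      rw [abs_le]
      simp only [hf]
      constructor
      · linarith
      · linarith
  have hupev := (Metric.tendsto_nhds.1 hupT) ε' hε'pos
  have hloev := (Metric.tendsto_nhds.1 hloT) ε' hε'pos
  have hPSL : |(∏ p ∈ S, f p) - L| < ε' := by
    have h := hY1
    rw [Real.dist_eq] at h
    exact h
  filter_upwards [hupev, hloev, htailev, Filter.eventually_gt_atTop (0:ℝ)] with X h1 h2 h3 hX0
  have hV := hVol X hX0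
  rw [Real.dist_eq] at h1 h2
  have h1' := (abs_lt.1 h1).2
  have h2' := (abs_lt.1 h2).1
  have hup : ((sievedBox n k c U X).ncard : ℝ) / boxVol n k c X
      ≤ ((latticeBox n k c X ∩ redInt n Mu ⁻¹' T'u).ncard : ℝ) / boxVol n k c X := by
    apply div_le_div_of_nonneg_right ?_ hV.le
    exact_mod_cast Set.ncard_le_ncard (hsub_up X) ((latticeBox_finite n k c X).inter_of_left _)
  have hlow : ((latticeBox n k c X ∩ redInt n Ml ⁻¹' T'l).ncard : ℝ) / boxVol n k c X
      ≤ ((sievedBox n k c U X).ncard : ℝ) / boxVol n k c X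
        + (({x ∈ latticeBox n k c X | ∃ p : Nat.Primes,
            Y < (p:ℕ) ∧ padicEmbed n p x ∈ U p}).ncard : ℝ) / boxVol n k c X := by
    have hfin1 : (sievedBox n k c U X).Finite :=
      (latticeBox_finite n k c X).subset (fun x hx => hx.1)
    have hfin2 : ({x ∈ latticeBox n k c X | ∃ p : Nat.Primes,
        Y < (p:ℕ) ∧ padicEmbed n p x ∈ U p}).Finite :=
      (latticeBox_finite n k c X).subset (Set.sep_subset _ _)
    have hn1 : (latticeBox n k c X ∩ redInt n Ml ⁻¹' T'l).ncard
        ≤ (sievedBox n k c U X ∪ {x ∈ latticeBox n k c X | ∃ p : Nat.Primes,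
            Y < (p:ℕ) ∧ padicEmbed n p x ∈ U p}).ncard :=
      Set.ncard_le_ncard (hsub_lo X) (hfin1.union hfin2)
    have hn2 := Set.ncard_union_le (sievedBox n k c U X)
      {x ∈ latticeBox n k c X | ∃ p : Nat.Primes, Y < (p:ℕ) ∧ padicEmbed n p x ∈ U p}
    have hcast : ((latticeBox n k c X ∩ redInt n Ml ⁻¹' T'l).ncard : ℝ)
        ≤ ((sievedBox n k c U X).ncard : ℝ)
          + (({x ∈ latticeBox n k c X | ∃ p : Nat.Primes,
              Y < (p:ℕ) ∧ padicEmbed n p x ∈ U p}).ncard : ℝ) := by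
      exact_mod_cast le_trans hn1 hn2
    calc ((latticeBox n k c X ∩ redInt n Ml ⁻¹' T'l).ncard : ℝ) / boxVol n k c X
        ≤ (((sievedBox n k c U X).ncard : ℝ)
            + (({x ∈ latticeBox n k c X | ∃ p : Nat.Primes,
                Y < (p:ℕ) ∧ padicEmbed n p x ∈ U p}).ncard : ℝ)) / boxVol n k c X :=
          div_le_div_of_nonneg_right hcast hV.le
      _ = _ := add_div _ _ _
  have habs_up := abs_le.1 hPS_up
  have habs_lo := abs_le.1 hPS_lo
  have habsPSL := abs_lt.1 hPSL
  rw [Real.dist_eq, abs_lt]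
  have hε4 : ε = 4 * ε' := by rw [hε']; ring
  constructor
  · linarith [h2', h3, hlow, habs_lo.2, habsPSL.1, hsum_εS]
  · linarith [h1', hup, habs_up.1, habsPSL.2, hsum_εS]


end
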